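/- Let Ω be a finite probability space and Ŷ, S : Ω → {0,1} with P(S=0) > 0 and P(S=1) > 0. Then for every attack b : {0,1} → {0,1}, the balanced accuracy ½(P(b∘Ŷ=0 | S=0) + P(b∘Ŷ=1 | S=1)) is at most ½(1 + |P(Ŷ=1 | S=1) − P(Ŷ=1 | S=0)|). -/

import Mathlib

open scoped Classical
noncomputable section

/-- Probability of an event under weight function `p` on a finite sample space. -/
def Pr {Omega : Type*} [Fintype Omega] (p : Omega → ℝ) (A : Omega → Prop) : ℝ :=
  ∑ ω, if A ω then p ω else 0

/-- Conditional probability `P(A | B)`. -/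
def cPr {Omega : Type*} [Fintype Omega] (p : Omega → ℝ) (A B : Omega → Prop) : ℝ :=
  Pr p (fun ω => A ω ∧ B ω) / Pr p B

section aux
variable {Omega : Type*} [Fintype Omega] (p : Omega → ℝ)

lemma Pr_congr {A B : Omega → Prop} (h : ∀ ω, A ω ↔ B ω) : Pr p A = Pr p B := by
  unfold Pr; exact Finset.sum_congr rfl fun ω _ => by rw [if_congr (h ω) rfl rfl]

lemma cPr_congr {A A' B : Omega → Prop} (h : ∀ ω, A ω ↔ A' ω) :
    cPr p A B = cPr p A' B := by
  unfold cPr; rw [Pr_congr p (fun ω => by rw [h ω])]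

lemma Pr_nonneg (hp : ∀ ω, 0 ≤ p ω) (A : Omega → Prop) : 0 ≤ Pr p A :=
  Finset.sum_nonneg fun ω _ => by by_cases h : A ω <;> simp [h, hp ω]

lemma Pr_split (A B : Omega → Prop) :
    Pr p (fun ω => A ω ∧ B ω) + Pr p (fun ω => ¬ A ω ∧ B ω) = Pr p B := by
  unfold Pr
  rw [← Finset.sum_add_distrib]
  refine Finset.sum_congr rfl fun ω _ => ?_
  by_cases hA : A ω <;> by_cases hB : B ω <;> simp [hA, hB]

lemma cPr_nonneg (hp : ∀ ω, 0 ≤ p ω) (A B : Omega → Prop) : 0 ≤ cPr p A B :=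
  div_nonneg (Pr_nonneg p hp _) (Pr_nonneg p hp _)

lemma cPr_le_one (hp : ∀ ω, 0 ≤ p ω) (A B : Omega → Prop) : cPr p A B ≤ 1 := by
  unfold cPr
  rcases eq_or_lt_of_le (Pr_nonneg p hp B) with h | h
  · simp [← h]
  · rw [div_le_one h]
    calc Pr p (fun ω => A ω ∧ B ω)
        ≤ Pr p (fun ω => A ω ∧ B ω) + Pr p (fun ω => ¬ A ω ∧ B ω) := by
          linarith [Pr_nonneg p hp (fun ω => ¬ A ω ∧ B ω)]
      _ = Pr p B := Pr_split p A B

lemma cPr_compl {B : Omega → Prop} (A : Omega → Prop) (hB : 0 < Pr p B) :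
    cPr p (fun ω => ¬ A ω) B = 1 - cPr p A B := by
  unfold cPr
  rw [eq_sub_iff_add_eq, ← add_div, div_eq_one_iff_eq (ne_of_gt hB),
    add_comm, Pr_split]

lemma cPr_true {B : Omega → Prop} (hB : 0 < Pr p B) :
    cPr p (fun _ => True) B = 1 := by
  unfold cPr
  rw [Pr_congr p (B := B) (fun ω => by simp), div_self (ne_of_gt hB)]

lemma cPr_false (B : Omega → Prop) : cPr p (fun _ => False) B = 0 := by
  unfold cPr Pr; simp

end aux

theorem stmt_14 {Omega : Type*} [Fintype Omega] (p : Omega → ℝ)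
    (hp : ∀ ω, 0 ≤ p ω) (hsum : ∑ ω, p ω = 1)
    (Yh S : Omega → Fin 2)
    (hS0 : 0 < Pr p (fun ω => S ω = 0)) (hS1 : 0 < Pr p (fun ω => S ω = 1)) :
    ∀ b : Fin 2 → Fin 2,
      (cPr p (fun ω => b (Yh ω) = 0) (fun ω => S ω = 0)
        + cPr p (fun ω => b (Yh ω) = 1) (fun ω => S ω = 1)) / 2
      ≤ (1 + |cPr p (fun ω => Yh ω = 1) (fun ω => S ω = 1)
            - cPr p (fun ω => Yh ω = 1) (fun ω => S ω = 0)|) / 2 := by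
  intro b
  set a0 := cPr p (fun ω => Yh ω = 1) (fun ω => S ω = 0) with ha0
  set a1 := cPr p (fun ω => Yh ω = 1) (fun ω => S ω = 1) with ha1
  have ha0n : 0 ≤ a0 := cPr_nonneg p hp _ _
  have ha1n : 0 ≤ a1 := cPr_nonneg p hp _ _
  have ha0b : a0 ≤ 1 := cPr_le_one p hp _ _
  have ha1b : a1 ≤ 1 := cPr_le_one p hp _ _
  have habs1 : a1 - a0 ≤ |a1 - a0| := le_abs_self _
  have habs2 : a0 - a1 ≤ |a1 - a0| := by rw [abs_sub_comm]; exact le_abs_self _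
  have habs0 : 0 ≤ |a1 - a0| := abs_nonneg _
  have hy : ∀ ω, Yh ω = 0 ∨ Yh ω = 1 := fun ω => by omega
  have h0 : b 0 = 0 ∨ b 0 = 1 := by omega
  have h1 : b 1 = 0 ∨ b 1 = 1 := by omega
  rcases h0 with h0 | h0 <;> rcases h1 with h1 | h1
  · -- b constant 0
    have e0 : cPr p (fun ω => b (Yh ω) = 0) (fun ω => S ω = 0) = 1 := by
      rw [cPr_congr p (A' := fun _ => True) (fun ω => by
        rcases hy ω with h | h <;> simp [h, h0, h1])]
      exact cPr_true p hS0
    have e1 : cPr p (fun ω => b (Yh ω) = 1) (fun ω => S ω = 1) = 0 := by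
      rw [cPr_congr p (A' := fun _ => False) (fun ω => by
        rcases hy ω with h | h <;> simp [h, h0, h1])]
      exact cPr_false p _
    rw [e0, e1]; linarith
  · -- b identity
    have e0 : cPr p (fun ω => b (Yh ω) = 0) (fun ω => S ω = 0) = 1 - a0 := by
      rw [cPr_congr p (A' := fun ω => ¬ (Yh ω = 1)) (fun ω => by
        rcases hy ω with h | h <;> simp [h, h0, h1])]
      exact cPr_compl p _ hS0
    have e1 : cPr p (fun ω => b (Yh ω) = 1) (fun ω => S ω = 1) = a1 := by
      rw [cPr_congr p (A' := fun ω => Yh ω = 1) (fun ω => by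
        rcases hy ω with h | h <;> simp [h, h0, h1])]
    rw [e0, e1]; linarith
  · -- b flip
    have e0 : cPr p (fun ω => b (Yh ω) = 0) (fun ω => S ω = 0) = a0 := by
      rw [cPr_congr p (A' := fun ω => Yh ω = 1) (fun ω => by
        rcases hy ω with h | h <;> simp [h, h0, h1])]
    have e1 : cPr p (fun ω => b (Yh ω) = 1) (fun ω => S ω = 1) = 1 - a1 := by
      rw [cPr_congr p (A' := fun ω => ¬ (Yh ω = 1)) (fun ω => by
        rcases hy ω with h | h <;> simp [h, h0, h1])]
      exact cPr_compl p _ hS1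
    rw [e0, e1]; linarith
  · -- b constant 1
    have e0 : cPr p (fun ω => b (Yh ω) = 0) (fun ω => S ω = 0) = 0 := by
      rw [cPr_congr p (A' := fun _ => False) (fun ω => by
        rcases hy ω with h | h <;> simp [h, h0, h1])]
      exact cPr_false p _
    have e1 : cPr p (fun ω => b (Yh ω) = 1) (fun ω => S ω = 1) = 1 := by
      rw [cPr_congr p (A' := fun _ => True) (fun ω => by
        rcases hy ω with h | h <;> simp [h, h0, h1])]
      exact cPr_true p hS1
    rw [e0, e1]; linarith
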